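/- Let i and j be real numbers with 0 < i, j < 1 and i + j = 1. For any integers p, r and any positive integer q, there exist integers A, B, C with gcd(A, B, C) = 1 and (A, B) ≠ (0, 0) such that A·p + B·r + C·q = 0, |A| ≤ q^i and |B| ≤ q^j. -/

import Mathlib

theorem stmt9 (i j : ℝ)
    (hi0 : 0 < i) (hi1 : i < 1) (hj0 : 0 < j) (hj1 : j < 1) (hij : i + j = 1)
    (p r : ℤ) (q : ℕ) (hq : 0 < q) :
    ∃ A B C : ℤ, Int.gcd A (Int.gcd B C : ℤ) = 1 ∧ (A, B) ≠ (0, 0) ∧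
      A * p + B * r + C * q = 0 ∧
      (|A| : ℝ) ≤ (q : ℝ) ^ i ∧ (|B| : ℝ) ≤ (q : ℝ) ^ j := by
  haveI : NeZero q := ⟨hq.ne'⟩
  have hqR : (0:ℝ) < (q:ℝ) := by exact_mod_cast hq
  set a := ⌊(q:ℝ)^i⌋₊ with ha
  set b := ⌊(q:ℝ)^j⌋₊ with hb
  have hai : (a:ℝ) ≤ (q:ℝ)^i := Nat.floor_le (Real.rpow_nonneg hqR.le i)
  have hbj : (b:ℝ) ≤ (q:ℝ)^j := Nat.floor_le (Real.rpow_nonneg hqR.le j)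
  have hcard : Fintype.card (ZMod q) < Fintype.card (Fin (a+1) × Fin (b+1)) := by
    rw [ZMod.card, Fintype.card_prod, Fintype.card_fin, Fintype.card_fin]
    have h1 : (q:ℝ)^i < (a:ℝ)+1 := Nat.lt_floor_add_one _
    have h2 : (q:ℝ)^j < (b:ℝ)+1 := Nat.lt_floor_add_one _
    have key : (q:ℝ) < ((a+1)*(b+1) : ℕ) := by
      have : (q:ℝ) = (q:ℝ)^i * (q:ℝ)^j := by
        rw [← Real.rpow_add hqR, hij, Real.rpow_one]
      rw [this]
      push_cast
      exact mul_lt_mul'' h1 h2 (Real.rpow_nonneg hqR.le i) (Real.rpow_nonneg hqR.le j)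
    exact_mod_cast key
  obtain ⟨u, v, huv, hfe⟩ := Fintype.exists_ne_map_eq_of_card_lt
    (fun x : Fin (a+1) × Fin (b+1) => (((x.1 : ℤ) * p + (x.2 : ℤ) * r : ℤ) : ZMod q)) hcard
  set A0 : ℤ := (u.1 : ℤ) - (v.1 : ℤ) with hA0def
  set B0 : ℤ := (u.2 : ℤ) - (v.2 : ℤ) with hB0def
  have hdvd : (q:ℤ) ∣ A0 * p + B0 * r := by
    rw [← ZMod.intCast_zmod_eq_zero_iff_dvd]
    push_cast
    simp only [hA0def, hB0def]
    push_cast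
    have : (((u.1 : ℤ) * p + (u.2 : ℤ) * r : ℤ) : ZMod q)
        = (((v.1 : ℤ) * p + (v.2 : ℤ) * r : ℤ) : ZMod q) := hfe
    push_cast at this
    ring_nf
    ring_nf at this
    linear_combination this
  set C0 : ℤ := -((A0 * p + B0 * r) / q) with hC0
  obtain ⟨k, hk⟩ := hdvd
  have hC0' : C0 = -k := by
    rw [hC0, hk, Int.mul_ediv_cancel_left _ (by exact_mod_cast hq.ne' : (q:ℤ) ≠ 0)]
  have heq0 : A0 * p + B0 * r + C0 * q = 0 := by
    rw [hC0', hk]; ring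
  have hne0 : ¬(A0 = 0 ∧ B0 = 0) := by
    rintro ⟨h1, h2⟩
    apply huv
    have e1 : u.1 = v.1 := by
      have : (u.1 : ℤ) = (v.1 : ℤ) := by omega
      exact Fin.ext (by exact_mod_cast this)
    have e2 : u.2 = v.2 := by
      have : (u.2 : ℤ) = (v.2 : ℤ) := by omega
      exact Fin.ext (by exact_mod_cast this)
    exact Prod.ext e1 e2
  set g : ℕ := Int.gcd A0 (Int.gcd B0 C0 : ℤ) with hg
  have hgpos : 0 < g := by
    rcases Nat.eq_zero_or_pos g with h | h
    · exfalso
      rw [hg, Int.gcd_eq_zero_iff] at h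
      obtain ⟨h1, h2⟩ := h
      have : Int.gcd B0 C0 = 0 := by exact_mod_cast h2
      rw [Int.gcd_eq_zero_iff] at this
      exact hne0 ⟨h1, this.1⟩
    · exact h
  have hgA : (g:ℤ) ∣ A0 := Int.gcd_dvd_left _ _
  have hgB : (g:ℤ) ∣ B0 := dvd_trans (Int.gcd_dvd_right _ _) (Int.gcd_dvd_left _ _)
  have hgC : (g:ℤ) ∣ C0 := dvd_trans (Int.gcd_dvd_right _ _) (Int.gcd_dvd_right _ _)
  obtain ⟨A, hA⟩ := hgA
  obtain ⟨B, hB⟩ := hgB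
  obtain ⟨C, hC⟩ := hgC
  have hgz : (g:ℤ) ≠ 0 := by exact_mod_cast hgpos.ne'
  refine ⟨A, B, C, ?_, ?_, ?_, ?_, ?_⟩
  · -- gcd = 1
    have hBC : Int.gcd B0 C0 = g * Int.gcd B C := by
      rw [hB, hC, Int.gcd_mul_left, Int.natAbs_natCast]
    have : g = g * Int.gcd A (Int.gcd B C : ℤ) := by
      conv_lhs => rw [hg, hA, hBC]
      push_cast
      rw [Int.gcd_mul_left, Int.natAbs_natCast]
    have h2 : g * 1 = g * Int.gcd A (Int.gcd B C : ℤ) := by rw [Nat.mul_one]; exact this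
    exact (Nat.eq_of_mul_eq_mul_left hgpos h2).symm
  · rintro h
    rw [Prod.mk.injEq] at h
    apply hne0
    constructor
    · rw [hA, h.1, mul_zero]
    · rw [hB, h.2, mul_zero]
  · have : (g:ℤ) * (A * p + B * r + C * q) = 0 := by
      rw [← heq0, hA, hB, hC]; ring
    rcases mul_eq_zero.mp this with h | h
    · exact absurd h hgz
    · exact h
  · -- |A| ≤ q^i
    have h1 : |A| ≤ |A0| := by
      rw [hA, abs_mul]
      calc |A| = 1 * |A| := (one_mul _).symm
        _ ≤ |(g:ℤ)| * |A| := by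
          apply mul_le_mul_of_nonneg_right _ (abs_nonneg _)
          rw [Int.abs_natCast]; exact_mod_cast hgpos
    have h2 : |A0| ≤ (a:ℤ) := by
      have hu := u.1.isLt
      have hv := v.1.isLt
      rw [hA0def, abs_le]
      omega
    calc (|A| : ℝ) ≤ (|A0| : ℝ) := by exact_mod_cast h1
      _ ≤ (a:ℝ) := by exact_mod_cast h2
      _ ≤ (q:ℝ)^i := hai
  · have h1 : |B| ≤ |B0| := by
      rw [hB, abs_mul]
      calc |B| = 1 * |B| := (one_mul _).symm
        _ ≤ |(g:ℤ)| * |B| := by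
          apply mul_le_mul_of_nonneg_right _ (abs_nonneg _)
          rw [Int.abs_natCast]; exact_mod_cast hgpos
    have h2 : |B0| ≤ (b:ℤ) := by
      have hu := u.2.isLt
      have hv := v.2.isLt
      rw [hB0def, abs_le]
      omega
    calc (|B| : ℝ) ≤ (|B0| : ℝ) := by exact_mod_cast h1
      _ ≤ (b:ℝ) := by exact_mod_cast h2
      _ ≤ (q:ℝ)^j := hbj
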